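/- Fix ε ∈ ℝ and define K̂₅(ε)(x, y, z) = (z x + y²)/(1 + ε²x²) on ℝ³. Then K̂₅(ε) is a Casimir function of the deformed Poisson structure Q⁽⁵⁾(ε) on ℝ³ with brackets {x,y} = x(1 + ε²x²), {y,z} = z − ε²x(x z + 2y²), {z,x} = 2y(1 + ε²x²): for all (x, y, z) ∈ ℝ³ the following three identities hold, where ∂K̂₅/∂x = (z − ε²x(x z + 2y²))/(1 + ε²x²)², ∂K̂₅/∂y = 2y/(1 + ε²x²), ∂K̂₅/∂z = x/(1 + ε²x²): (i) x(1 + ε²x²)·∂K̂₅/∂y − 2y(1 + ε²x²)·∂K̂₅/∂z = 0; (ii) −x(1 + ε²x²)·∂K̂₅/∂x + (z − ε²x(x z + 2y²))·∂K̂₅/∂z = 0; (iii) 2y(1 + ε²x²)·∂K̂₅/∂x − (z − ε²x(x z + 2y²))·∂K̂₅/∂y = 0. -/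

import Mathlib

/-- `K̂₅(ε)(x,y,z) = (zx+y²)/(1+ε²x²)` is a Casimir of the deformed Poisson
structure `Q⁽⁵⁾(ε)` with `{x,y} = x(1+ε²x²)`, `{y,z} = z-ε²x(xz+2y²)`,
`{z,x} = 2y(1+ε²x²)`: with partial derivatives
`∂K̂₅/∂x = (z-ε²x(xz+2y²))/(1+ε²x²)²`, `∂K̂₅/∂y = 2y/(1+ε²x²)`,
`∂K̂₅/∂z = x/(1+ε²x²)`, the three components of `Q⁽⁵⁾(ε)·dK̂₅` vanish. -/
theorem K5_casimir_deformed_Q5 (ε : ℝ) :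
    ∀ x y z : ℝ,
      HasDerivAt (fun s : ℝ => (z*s + y^2)/(1 + ε^2*s^2))
        ((z - ε^2*x*(x*z + 2*y^2))/(1 + ε^2*x^2)^2) x ∧
      HasDerivAt (fun s : ℝ => (z*x + s^2)/(1 + ε^2*x^2))
        (2*y/(1 + ε^2*x^2)) y ∧
      HasDerivAt (fun s : ℝ => (s*x + y^2)/(1 + ε^2*x^2))
        (x/(1 + ε^2*x^2)) z ∧
      x*(1 + ε^2*x^2)*(2*y/(1 + ε^2*x^2)) -
        2*y*(1 + ε^2*x^2)*(x/(1 + ε^2*x^2)) = 0 ∧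
      -(x*(1 + ε^2*x^2))*((z - ε^2*x*(x*z + 2*y^2))/(1 + ε^2*x^2)^2) +
        (z - ε^2*x*(x*z + 2*y^2))*(x/(1 + ε^2*x^2)) = 0 ∧
      2*y*(1 + ε^2*x^2)*((z - ε^2*x*(x*z + 2*y^2))/(1 + ε^2*x^2)^2) -
        (z - ε^2*x*(x*z + 2*y^2))*(2*y/(1 + ε^2*x^2)) = 0 := by
  intro x y z
  have hden : ∀ s : ℝ, (1 : ℝ) + ε^2*s^2 ≠ 0 := fun s => by positivity
  have hx := hden x
  refine ⟨?_, ?_, ?_, ?_, ?_, ?_⟩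
  · have h1 : HasDerivAt (fun s : ℝ => z*s + y^2) z x := by
      simpa using ((hasDerivAt_id x).const_mul z).add_const (y^2)
    have h2 : HasDerivAt (fun s : ℝ => 1 + ε^2*s^2) (ε^2*(2*x)) x := by
      simpa using (((hasDerivAt_pow 2 x)).const_mul (ε^2)).const_add 1
    have this : HasDerivAt (fun s : ℝ => (z*s + y^2)/(1 + ε^2*s^2)) _ x := h1.div h2 hx
    convert this using 1
    field_simp
    ring
  · have h1 : HasDerivAt (fun s : ℝ => z*x + s^2) (2*y) y := by
      simpa using (hasDerivAt_pow 2 y).const_add (z*x)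
    simpa using h1.div_const (1 + ε^2*x^2)
  · have h1 : HasDerivAt (fun s : ℝ => s*x + y^2) x z := by
      simpa using ((hasDerivAt_id z).mul_const x).add_const (y^2)
    exact h1.div_const (1 + ε^2*x^2)
  · field_simp; ring
  · field_simp; ring
  · field_simp; ring
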